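/- Let f(p) = sum over nonnegative integer tuples (eta_1,...,eta_{n+1}) with eta_1+...+eta_{n+1}=k of the product over i of C(p_i - eta_i, eta_i), where C denotes the generalized binomial coefficient (defined by the falling factorial formula for all integer arguments). Then f is invariant under replacing (p_1, p_2) by (p_1+1, p_2-1); consequently f(p) depends only on the sum p_1+...+p_{n+1}, the length n+1, and k. -/

import Mathlib

open scoped BigOperators

/-- `l` is a partition: weakly decreasing list of positive integers. -/
def IsPartitionList (l : List ℕ) : Prop :=
  l.Pairwise (· ≥ ·) ∧ ∀ x ∈ l, 0 < x

/-- `l` is a composition: list of positive integers. -/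
def IsCompositionList (l : List ℕ) : Prop := ∀ x ∈ l, 0 < x

/-- cell `(i, j)` (row `i` from the top, column `j`, both 0-based) of the skew shape `lam/mu`. -/
def SkewCell (lam mu : List ℕ) (i j : ℕ) : Prop :=
  i < lam.length ∧ mu.getD i 0 ≤ j ∧ j < lam.getD i 0

/-- Semistandard filling of the skew shape `lam/mu` (rows weakly increase left to right,
columns strictly increase top to bottom), with junk value `0` off the shape. -/
def IsSkewSSYT (lam mu : List ℕ) (T : ℕ → ℕ → ℕ) : Prop :=
  (∀ i j, ¬ SkewCell lam mu i j → T i j = 0) ∧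
  (∀ i j, SkewCell lam mu i j → SkewCell lam mu i (j + 1) → T i j ≤ T i (j + 1)) ∧
  (∀ i j, SkewCell lam mu i j → SkewCell lam mu (i + 1) j → T i j < T (i + 1) j)

/-- number of cells of `lam/mu` that `T` fills with the value `v`. -/
def skewContent (lam mu : List ℕ) (T : ℕ → ℕ → ℕ) (v : ℕ) : ℕ :=
  ∑ i ∈ Finset.range lam.length,
    ((Finset.Ico (mu.getD i 0) (lam.getD i 0)).filter fun j => T i j = v).card

/-- The skew Schur function of `lam/mu` as a formal power series in variables `x_0, x_1, …`:
the coefficient of a monomial `m` is the number of semistandard fillings of content `m`. -/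
noncomputable def skewSchur (lam mu : List ℕ) : MvPowerSeries ℕ ℤ :=
  fun m => (Set.ncard {T : ℕ → ℕ → ℕ |
    IsSkewSSYT lam mu T ∧ ∀ v, skewContent lam mu T v = m v} : ℤ)

/-- The Schur function of a partition. -/
noncomputable def schurFn (lam : List ℕ) : MvPowerSeries ℕ ℤ := skewSchur lam []

/-- Outer shape of the ribbon whose row lengths read from top to bottom are `α`. -/
def ribbonOuter (α : List ℕ) : List ℕ :=
  List.ofFn fun i : Fin α.length => (α.drop (i : ℕ)).sum - (α.length - 1 - (i : ℕ))

/-- Inner shape of the ribbon whose row lengths read from top to bottom are `α`. -/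
def ribbonInner (α : List ℕ) : List ℕ :=
  List.ofFn fun i : Fin α.length =>
    (α.drop (i : ℕ)).sum - (α.length - 1 - (i : ℕ)) - α.getD (i : ℕ) 0

/-- The ribbon Schur function of the composition `α`. -/
noncomputable def ribbonSchur (α : List ℕ) : MvPowerSeries ℕ ℤ :=
  skewSchur (ribbonOuter α) (ribbonInner α)

/-- A symmetric function is Schur-positive if it is a finite nonnegative integer
combination of Schur functions of partitions. -/
def SchurPos (f : MvPowerSeries ℕ ℤ) : Prop :=
  ∃ c : List ℕ →₀ ℕ, (∀ μ ∈ c.support, IsPartitionList μ) ∧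
    f = c.sum fun μ n => (n : ℤ) • schurFn μ

/-- Strict Schur-positivity order: `f >_s g`. -/
def SchurGT (f g : MvPowerSeries ℕ ℤ) : Prop := SchurPos (f - g) ∧ f ≠ g

/-- near-concatenation of compositions. -/
def nearConcat (a b : List ℕ) : List ℕ :=
  a.dropLast ++ (a.getLastD 0 + b.headI) :: b.tail

/-- near-concatenation of `k` copies of `b`. -/
def odotPow (b : List ℕ) : ℕ → List ℕ
  | 0 => []
  | k + 1 => nearConcat (odotPow b k) b

/-- composition of compositions `a ∘ b`. -/
def compComp (a b : List ℕ) : List ℕ := (a.map (odotPow b)).flatten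

/-- `M_i` (with `i` 1-based): decrement the first part by one, increment the `i`-th part by one. -/
def Mi (α : List ℕ) (i : ℕ) : List ℕ :=
  (α.set (i - 1) (α.getD (i - 1) 0 + 1)).set 0 (α.headI - 1)

/-- the complete homogeneous symmetric function `h_N`: the sum of all monomials of degree `N`. -/
noncomputable def hN (N : ℕ) : MvPowerSeries ℕ ℤ :=
  fun m => if (∑ v ∈ m.support, m v) = N then 1 else 0

/-- `h_λ = h_{λ_1} ⋯ h_{λ_k}`. -/
noncomputable def hProd (l : List ℕ) : MvPowerSeries ℕ ℤ := (l.map hN).prod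

/-- lexicographic order on partitions (padding with zeros). -/
def LexLt (μ ν : List ℕ) : Prop :=
  ∃ k, (∀ i < k, μ.getD i 0 = ν.getD i 0) ∧ μ.getD k 0 < ν.getD k 0

/-- entrywise union (max) of two partitions. -/
def pUnion (a b : List ℕ) : List ℕ :=
  List.ofFn fun i : Fin (max a.length b.length) => max (a.getD (i : ℕ) 0) (b.getD (i : ℕ) 0)

/-- entrywise intersection (min) of two partitions. -/
def pInter (a b : List ℕ) : List ℕ :=
  List.ofFn fun i : Fin (min a.length b.length) => min (a.getD (i : ℕ) 0) (b.getD (i : ℕ) 0)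

/-- the number of end rows (first and last part) of `γ` equal to `a`. -/
def shortEnds (a : ℕ) (γ : List ℕ) : ℕ :=
  (if γ.headI = a then 1 else 0) + (if γ.getLastD 0 = a then 1 else 0)

/-- cells of the ribbon whose row lengths read from the bottom are `β`;
cells are pairs `(row, column)`, rows counted from the bottom starting at `0`. -/
def ribbonCells (β : List ℕ) : Finset (ℕ × ℕ) :=
  (Finset.range β.length).biUnion fun i =>
    (Finset.Ico ((β.take i).sum - i) ((β.take i).sum - i + β.getD i 0)).image fun j => (i, j)

/-- The box diagonal diagram `P_{R,S}`: cells `(x, y)` (column `x`, row `y` from the bottom,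
both 1-based, with the top-right corner of the cell at the point `(x, y)`) of the `R × S` grid
whose interior or top-left corner point is met by the line `y = (R/S) x`. -/
def boxDiagonal (R S : ℕ) : Finset (ℕ × ℕ) :=
  (Finset.Icc 1 S ×ˢ Finset.Icc 1 R).filter fun c =>
    (R : ℚ) * ((c.1 : ℚ) - 1) ≤ (S : ℚ) * (c.2 : ℚ) ∧
    (S : ℚ) * ((c.2 : ℚ) - 1) < (R : ℚ) * (c.1 : ℚ)

/-- length of row `y` (from the bottom, 1-based) of `P_{R,S}`. -/
def bdRowLen (R S y : ℕ) : ℕ := ((boxDiagonal R S).filter fun c => c.2 = y).card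

/-- length of column `x` (1-based) of `P_{R,S}`. -/
def bdColLen (R S x : ℕ) : ℕ := ((boxDiagonal R S).filter fun c => c.1 = x).card

/-- the set of columns occupied by row `y` of `P_{R,S}`. -/
def bdRowCols (R S y : ℕ) : Finset ℕ :=
  ((boxDiagonal R S).filter fun c => c.2 = y).image Prod.fst

/-- generalized binomial coefficient `C(z, k) = z(z-1)⋯(z-k+1)/k!` for arbitrary integer `z`. -/
def gbinom (z : ℤ) (k : ℕ) : ℚ :=
  (∏ i ∈ Finset.range k, ((z : ℚ) - (i : ℚ))) / (Nat.factorial k : ℚ)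

/-- `f(p) = ∑_{η_1+⋯+η_n = k} ∏_i C(p_i - η_i, η_i)`. -/
def jensenSum (n k : ℕ) (p : Fin n → ℤ) : ℚ :=
  ∑ η ∈ Finset.Nat.antidiagonalTuple n k, ∏ i, gbinom (p i - (η i : ℤ)) (η i)

section JensenAux

lemma gbinom_zero' (z : ℤ) : gbinom z 0 = 1 := by simp [gbinom]

lemma gbinom_pascal (z : ℤ) (k : ℕ) :
    gbinom z (k+1) = gbinom (z-1) (k+1) + gbinom (z-1) k := by
  have h1 : ∏ i ∈ Finset.range (k+1), ((z : ℚ) - (i : ℚ))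
      = (z:ℚ) * ∏ i ∈ Finset.range k, (((z-1 : ℤ) : ℚ) - (i : ℚ)) := by
    rw [Finset.prod_range_succ',
      Finset.prod_congr rfl (fun i _ => by push_cast; ring :
        ∀ i ∈ Finset.range k, ((z:ℚ) - ((i+1 : ℕ):ℚ)) = (((z-1:ℤ)):ℚ) - (i:ℚ))]
    push_cast
    ring
  have h2 : ∏ i ∈ Finset.range (k+1), (((z-1:ℤ) : ℚ) - (i : ℚ))
      = (∏ i ∈ Finset.range k, (((z-1:ℤ) : ℚ) - (i : ℚ))) * (((z-1:ℤ):ℚ) - k) :=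
    Finset.prod_range_succ _ _
  have hf : ((Nat.factorial (k+1) : ℚ)) = (k+1) * (Nat.factorial k : ℚ) := by
    rw [Nat.factorial_succ]; push_cast; ring
  have hfk : (Nat.factorial k : ℚ) ≠ 0 := Nat.cast_ne_zero.mpr (Nat.factorial_ne_zero k)
  have hk1 : ((k:ℚ)+1) ≠ 0 := by positivity
  unfold gbinom
  rw [h1, h2, hf]
  push_cast
  field_simp
  ring

/-- two-variable Jensen kernel -/
def F2 (m : ℕ) (x y : ℤ) : ℚ :=
  ∑ p ∈ Finset.HasAntidiagonal.antidiagonal m, gbinom (x - p.1) p.1 * gbinom (y - p.2) p.2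

lemma F2_rec_x (m : ℕ) (x y : ℤ) :
    F2 (m+1) x y = F2 (m+1) (x-1) y + F2 m (x-2) y := by
  unfold F2
  rw [Finset.Nat.sum_antidiagonal_succ, Finset.Nat.sum_antidiagonal_succ (n := m)]
  have key : ∀ p : ℕ × ℕ, p ∈ Finset.HasAntidiagonal.antidiagonal m →
      gbinom (x - (p.1+1 : ℕ)) (p.1+1) * gbinom (y - p.2) p.2
      = gbinom (x - 1 - (p.1+1 : ℕ)) (p.1+1) * gbinom (y - p.2) p.2
        + gbinom (x - 2 - (p.1 : ℕ)) p.1 * gbinom (y - p.2) p.2 := by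
    intro p _
    have := gbinom_pascal (x - (p.1+1 : ℕ)) p.1
    push_cast at this ⊢
    rw [show x - ((p.1:ℤ)+1) - 1 = x - 1 - ((p.1:ℤ)+1) by ring] at this
    rw [this, add_mul]
    congr 3
    ring
  rw [Finset.sum_congr rfl key, Finset.sum_add_distrib]
  simp only [Nat.cast_zero, sub_zero, gbinom_zero', one_mul]
  ring

lemma F2_rec_y (m : ℕ) (x y : ℤ) :
    F2 (m+1) x y = F2 (m+1) x (y-1) + F2 m x (y-2) := by
  unfold F2
  rw [Finset.Nat.sum_antidiagonal_succ', Finset.Nat.sum_antidiagonal_succ' (n := m)]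
  have key : ∀ p : ℕ × ℕ, p ∈ Finset.HasAntidiagonal.antidiagonal m →
      gbinom (x - p.1) p.1 * gbinom (y - (p.2+1 : ℕ)) (p.2+1)
      = gbinom (x - p.1) p.1 * gbinom (y - 1 - (p.2+1 : ℕ)) (p.2+1)
        + gbinom (x - p.1) p.1 * gbinom (y - 2 - (p.2 : ℕ)) p.2 := by
    intro p _
    have := gbinom_pascal (y - (p.2+1 : ℕ)) p.2
    push_cast at this ⊢
    rw [show y - ((p.2:ℤ)+1) - 1 = y - 1 - ((p.2:ℤ)+1) by ring] at this
    rw [this, mul_add]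
    congr 3
    ring
  rw [Finset.sum_congr rfl key, Finset.sum_add_distrib]
  simp only [Nat.cast_zero, sub_zero, gbinom_zero', mul_one]
  ring

lemma F2_move (m : ℕ) (x y : ℤ) : F2 m (x+1) (y-1) = F2 m x y := by
  induction m generalizing x y with
  | zero => simp [F2, gbinom_zero']
  | succ m ih =>
      rw [F2_rec_x (x := x+1) (y := y-1), F2_rec_y (x := x) (y := y)]
      have h1 : x + 1 - 1 = x := by ring
      have h2 : x + 1 - 2 = x - 1 := by ring
      rw [h1, h2]
      congr 1
      have := ih (x-1) (y-1)
      rw [show x - 1 + 1 = x by ring, show y - 1 - 1 = y - 2 by ring] at this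
      exact this.symm

lemma F2_shift (m : ℕ) (x y : ℤ) (t : ℤ) : F2 m (x+t) (y-t) = F2 m x y := by
  induction t using Int.induction_on with
  | zero => simp
  | succ t ih =>
      have h := F2_move m (x+t) (y-t)
      rw [show x + ((t:ℤ)+1) = (x+t)+1 by ring, show y - ((t:ℤ)+1) = (y-t)-1 by ring, h]
      exact ih
  | pred t ih =>
      have h := F2_move m (x - (t+1)) (y + (t+1))
      rw [show x - ((t:ℤ)+1) + 1 = x + -(t:ℤ) by ring,
        show y + ((t:ℤ)+1) - 1 = y - -(t:ℤ) by ring] at h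
      rw [show x + (-(t:ℤ) - 1) = x - ((t:ℤ)+1) by ring,
        show y - (-(t:ℤ) - 1) = y + ((t:ℤ)+1) by ring, ← h]
      exact ih

lemma jensenSum_succ (n k : ℕ) (p : Fin (n+1) → ℤ) :
    jensenSum (n+1) k p
      = ∑ x ∈ Finset.HasAntidiagonal.antidiagonal k,
          gbinom (p 0 - x.1) x.1 * jensenSum n x.2 (p ∘ Fin.succ) := by
  unfold jensenSum
  simp_rw [Finset.mul_sum]
  rw [Finset.sum_sigma' (Finset.HasAntidiagonal.antidiagonal k) (fun x => Finset.Nat.antidiagonalTuple n x.2)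
    (fun x η => gbinom (p 0 - x.1) x.1 * ∏ i, gbinom ((p ∘ Fin.succ) i - (η i : ℤ)) (η i))]
  refine Finset.sum_nbij' (i := fun (η : Fin (n+1) → ℕ) =>
      (⟨(η 0, ∑ i : Fin n, η i.succ), Fin.tail η⟩ : (_ : ℕ × ℕ) × (Fin n → ℕ)))
    (j := fun z => Fin.cons z.1.1 z.2) ?_ ?_ ?_ ?_ ?_
  · intro η hη
    rw [Finset.Nat.mem_antidiagonalTuple] at hη
    rw [Finset.mem_sigma, Finset.HasAntidiagonal.mem_antidiagonal]
    constructor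
    · rw [← hη, Fin.sum_univ_succ]
    · rw [Finset.Nat.mem_antidiagonalTuple]; rfl
  · intro z hz
    rw [Finset.mem_sigma, Finset.HasAntidiagonal.mem_antidiagonal,
      Finset.Nat.mem_antidiagonalTuple] at hz
    rw [Finset.Nat.mem_antidiagonalTuple, Fin.sum_univ_succ]
    simp [Fin.cons_zero, Fin.cons_succ, hz.2, hz.1]
  · intro η _
    exact Fin.cons_self_tail η
  · intro z hz
    rw [Finset.mem_sigma, Finset.HasAntidiagonal.mem_antidiagonal,
      Finset.Nat.mem_antidiagonalTuple] at hz
    refine Sigma.ext ?_ ?_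
    · simp only [Fin.cons_zero, Fin.cons_succ]
      rw [hz.2]
    · simp [Fin.tail_cons]
  · intro η _
    rw [Fin.prod_univ_succ]
    rfl

lemma antidiagonal_rot (k : ℕ) (f : ℕ → ℕ → ℕ → ℚ) :
    ∑ x ∈ Finset.HasAntidiagonal.antidiagonal k, ∑ y ∈ Finset.HasAntidiagonal.antidiagonal x.2, f x.1 y.1 y.2
      = ∑ x ∈ Finset.HasAntidiagonal.antidiagonal k, ∑ y ∈ Finset.HasAntidiagonal.antidiagonal x.1, f y.1 y.2 x.2 := by
  rw [Finset.sum_sigma' (Finset.HasAntidiagonal.antidiagonal k) (fun x => Finset.HasAntidiagonal.antidiagonal x.2)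
      (fun x y => f x.1 y.1 y.2),
    Finset.sum_sigma' (Finset.HasAntidiagonal.antidiagonal k) (fun x => Finset.HasAntidiagonal.antidiagonal x.1)
      (fun x y => f y.1 y.2 x.2)]
  refine Finset.sum_nbij' (i := fun z => (⟨(z.1.1 + z.2.1, z.2.2), (z.1.1, z.2.1)⟩ :
      (_ : ℕ × ℕ) × (ℕ × ℕ)))
    (j := fun z => (⟨(z.2.1, z.2.2 + z.1.2), (z.2.2, z.1.2)⟩ : (_ : ℕ × ℕ) × (ℕ × ℕ))) ?_ ?_ ?_ ?_ ?_
  · rintro ⟨⟨a, bc⟩, b, c⟩ hz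
    simp only [Finset.mem_sigma, Finset.HasAntidiagonal.mem_antidiagonal, and_true, true_and] at hz ⊢
    omega
  · rintro ⟨⟨ab, c⟩, a, b⟩ hz
    simp only [Finset.mem_sigma, Finset.HasAntidiagonal.mem_antidiagonal, and_true, true_and] at hz ⊢
    omega
  · rintro ⟨⟨a, bc⟩, b, c⟩ hz
    simp only [Finset.mem_sigma, Finset.HasAntidiagonal.mem_antidiagonal] at hz
    simp only [Sigma.mk.inj_iff, Prod.mk.injEq, heq_eq_eq, and_true, true_and]
    omega
  · rintro ⟨⟨ab, c⟩, a, b⟩ hz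
    simp only [Finset.mem_sigma, Finset.HasAntidiagonal.mem_antidiagonal] at hz
    simp only [Sigma.mk.inj_iff, Prod.mk.injEq, heq_eq_eq, and_true, true_and]
    omega
  · rintro ⟨⟨a, bc⟩, b, c⟩ hz
    rfl

lemma jensenSum_perm (n k : ℕ) (p : Fin n → ℤ) (σ : Equiv.Perm (Fin n)) :
    jensenSum n k (p ∘ σ) = jensenSum n k p := by
  unfold jensenSum
  refine Finset.sum_nbij' (i := fun η => η ∘ σ.symm) (j := fun η => η ∘ σ) ?_ ?_ ?_ ?_ ?_
  · intro η hη
    rw [Finset.Nat.mem_antidiagonalTuple] at hη ⊢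
    rw [← hη]
    exact Equiv.sum_comp σ.symm η
  · intro η hη
    rw [Finset.Nat.mem_antidiagonalTuple] at hη ⊢
    rw [← hη]
    exact Equiv.sum_comp σ η
  · intro η _; funext i; simp
  · intro η _; funext i; simp
  · intro η _
    calc ∏ i, gbinom ((p ∘ σ) i - (η i : ℤ)) (η i)
        = ∏ i, gbinom ((p ∘ σ) (σ.symm i) - (η (σ.symm i) : ℤ)) (η (σ.symm i)) :=
          (Equiv.prod_comp σ.symm fun i => gbinom ((p ∘ σ) i - (η i : ℤ)) (η i)).symm
      _ = ∏ i, gbinom (p i - ((η ∘ σ.symm) i : ℤ)) ((η ∘ σ.symm) i) := by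
          refine Finset.prod_congr rfl fun i _ => ?_
          simp

lemma jensenSum_pair (n k : ℕ) (p : Fin (n+2) → ℤ) :
    jensenSum (n+2) k p = ∑ x ∈ Finset.HasAntidiagonal.antidiagonal k,
      F2 x.1 (p 0) (p 1) * jensenSum n x.2 (p ∘ Fin.succ ∘ Fin.succ) := by
  have hps0 : (p ∘ Fin.succ) 0 = p 1 := rfl
  rw [jensenSum_succ]
  have step : ∀ x ∈ Finset.HasAntidiagonal.antidiagonal k,
      gbinom (p 0 - x.1) x.1 * jensenSum (n+1) x.2 (p ∘ Fin.succ)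
      = ∑ y ∈ Finset.HasAntidiagonal.antidiagonal x.2,
          gbinom (p 0 - x.1) x.1 *
            (gbinom (p 1 - y.1) y.1 * jensenSum n y.2 (p ∘ Fin.succ ∘ Fin.succ)) := by
    intro x _
    rw [jensenSum_succ, Finset.mul_sum]
    rfl
  rw [Finset.sum_congr rfl step,
    antidiagonal_rot k (fun a b c =>
      gbinom (p 0 - a) a * (gbinom (p 1 - b) b * jensenSum n c (p ∘ Fin.succ ∘ Fin.succ)))]
  refine Finset.sum_congr rfl fun x _ => ?_
  rw [F2, Finset.sum_mul]
  refine Finset.sum_congr rfl fun y _ => ?_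
  ring

lemma jensenSum_move01 (n k : ℕ) (p q : Fin (n+2) → ℤ)
    (h0 : p 0 + p 1 = q 0 + q 1)
    (ht : p ∘ Fin.succ ∘ Fin.succ = q ∘ Fin.succ ∘ Fin.succ) :
    jensenSum (n+2) k p = jensenSum (n+2) k q := by
  rw [jensenSum_pair, jensenSum_pair, ht]
  refine Finset.sum_congr rfl fun x _ => ?_
  congr 1
  have := F2_shift x.1 (p 0) (p 1) (q 0 - p 0)
  rw [show p 0 + (q 0 - p 0) = q 0 by ring,
    show p 1 - (q 0 - p 0) = q 1 by linarith] at this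
  exact this.symm

lemma fin_succ_succ_ne_zero {n : ℕ} (i : Fin n) :
    (Fin.succ (Fin.succ i) : Fin (n+2)) ≠ 0 := Fin.succ_ne_zero _

lemma fin_succ_succ_ne_one {n : ℕ} (i : Fin n) :
    (Fin.succ (Fin.succ i) : Fin (n+2)) ≠ 1 := by
  intro h
  have : (Fin.succ (Fin.succ i) : Fin (n+2)).val = 1 := by rw [h]; simp [Fin.val_one]
  simp [Fin.val_succ] at this

lemma jensenSum_move (n k : ℕ) (p : Fin (n+2) → ℤ) (j : Fin (n+2)) (hj : j ≠ 0)
    (a b : ℤ) (hab : a + b = p 0 + p j) :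
    jensenSum (n+2) k (Function.update (Function.update p 0 a) j b) = jensenSum (n+2) k p := by
  set q := Function.update (Function.update p 0 a) j b with hq
  have hq0 : q 0 = a := by
    rw [hq, Function.update_of_ne (Ne.symm hj), Function.update_self]
  have hqj : q j = b := by rw [hq, Function.update_self]
  have hqother : ∀ v : Fin (n+2), v ≠ 0 → v ≠ j → q v = p v := by
    intro v h1 h2
    rw [hq, Function.update_of_ne h2, Function.update_of_ne h1]
  by_cases hj1 : j = 1
  · subst hj1
    apply jensenSum_move01
    · rw [hq0, hqj]; omega
    · funext i
      exact hqother _ (fin_succ_succ_ne_zero i) (fin_succ_succ_ne_one i)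
  · have h01 : (0 : Fin (n+2)) ≠ 1 := by
      intro h
      have := congrArg Fin.val h
      simp [Fin.val_one] at this
    set σ := Equiv.swap (1 : Fin (n+2)) j with hσdef
    have hσ0 : σ 0 = 0 := Equiv.swap_apply_of_ne_of_ne h01 (Ne.symm hj)
    have hσ1 : σ 1 = j := Equiv.swap_apply_left 1 j
    have hσj : σ j = 1 := Equiv.swap_apply_right 1 j
    rw [← jensenSum_perm (n+2) k q σ, ← jensenSum_perm (n+2) k p σ]
    apply jensenSum_move01
    · show q (σ 0) + q (σ 1) = p (σ 0) + p (σ 1)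
      rw [hσ0, hσ1, hq0, hqj]
      exact hab
    · funext i
      show q (σ (Fin.succ (Fin.succ i))) = p (σ (Fin.succ (Fin.succ i)))
      set v := (Fin.succ (Fin.succ i) : Fin (n+2)) with hv
      by_cases hvj : v = j
      · rw [hvj, hσj]
        exact hqother 1 (Ne.symm h01) (fun h => hj1 h.symm)
      · rw [Equiv.swap_apply_of_ne_of_ne (fin_succ_succ_ne_one i) hvj]
        exact hqother v (fin_succ_succ_ne_zero i) hvj

lemma sum_update_update (n : ℕ) (p : Fin (n+2) → ℤ) (j : Fin (n+2)) (hj : j ≠ 0)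
    (a b : ℤ) (hab : a + b = p 0 + p j) :
    ∑ i, Function.update (Function.update p 0 a) j b i = ∑ i, p i := by
  classical
  rw [Finset.sum_update_of_mem (Finset.mem_univ j)]
  have h0mem : (0 : Fin (n+2)) ∈ (Finset.univ : Finset (Fin (n+2))) \ {j} := by
    simp [Ne.symm hj]
  rw [Finset.sum_update_of_mem h0mem]
  have hsplit1 : ∑ i, p i = p j + ∑ i ∈ Finset.univ \ {j}, p i := by
    rw [Finset.sum_eq_add_sum_sdiff_singleton_of_mem (Finset.mem_univ j)]
  have hsplit2 : ∑ i ∈ Finset.univ \ {j}, p i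
      = p 0 + ∑ i ∈ (Finset.univ \ {j}) \ {0}, p i := by
    rw [Finset.sum_eq_add_sum_sdiff_singleton_of_mem h0mem]
  rw [hsplit1, hsplit2]
  ring_nf
  omega

lemma jensenSum_key (n k : ℕ) : ∀ m : ℕ, ∀ p q : Fin (n+2) → ℤ,
    (∀ i : Fin (n+2), m + 1 ≤ (i : ℕ) → p i = q i) → (∑ i, p i) = (∑ i, q i) →
    jensenSum (n+2) k p = jensenSum (n+2) k q := by
  intro m
  induction m with
  | zero =>
      intro p q hag hsum
      have ht : ∀ i : Fin (n+1), p i.succ = q i.succ := by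
        intro i
        exact hag _ (by simp [Fin.val_succ])
      have h0 : p 0 = q 0 := by
        have hsum' : p 0 + ∑ i : Fin (n+1), p i.succ
            = q 0 + ∑ i : Fin (n+1), q i.succ := by
          rw [← Fin.sum_univ_succ, ← Fin.sum_univ_succ]
          exact hsum
        rw [Finset.sum_congr rfl (fun i _ => ht i)] at hsum'
        linarith
      have : p = q := by
        funext i
        induction i using Fin.cases with
        | zero => exact h0
        | succ i => exact ht i
      rw [this]
  | succ m ih =>
      intro p q hag hsum
      by_cases hm : m + 1 ≤ n + 1
      · set iM : Fin (n+2) := ⟨m+1, by omega⟩ with hiM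
        have hiM0 : iM ≠ 0 := by
          intro h
          have := congrArg Fin.val h
          simp [hiM] at this
        set a := p 0 + (p iM - q iM) with ha
        set b := q iM with hb
        have hab : a + b = p 0 + p iM := by rw [ha, hb]; ring
        set p' := Function.update (Function.update p 0 a) iM b with hp'
        have h1 : jensenSum (n+2) k p' = jensenSum (n+2) k p :=
          jensenSum_move n k p iM hiM0 a b hab
        have h2 : (∑ i, p' i) = ∑ i, p i := sum_update_update n p iM hiM0 a b hab
        rw [← h1]
        refine ih p' q ?_ (h2.trans hsum)
        intro i hi
        by_cases hij : i = iM
        · rw [hij, hp', Function.update_self, hb]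
        · have hi0 : i ≠ 0 := by
            intro h
            rw [h] at hi
            simp at hi
          rw [hp', Function.update_of_ne hij, Function.update_of_ne hi0]
          refine hag i ?_
          have : (i : ℕ) ≠ m + 1 := by
            intro h
            exact hij (Fin.ext (by simp [hiM, h]))
          omega
      · refine ih p q ?_ hsum
        intro i hi
        have := i.isLt
        omega

end JensenAux

/-- the sum `f(p) = ∑_{η_1+⋯+η_{n+1}=k} ∏_i C(p_i-η_i, η_i)` is invariant under
replacing `(p_1, p_2)` by `(p_1+1, p_2-1)`; consequently it depends only on the sum of the
`p_i`, the length, and `k`. (Tuples of length `n+2 ≥ 2` so that two entries exist.) -/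


theorem jensenSum_invariant (n k : ℕ) (p : Fin (n + 2) → ℤ) :
    jensenSum (n + 2) k p =
      jensenSum (n + 2) k (Function.update (Function.update p 0 (p 0 + 1)) 1 (p 1 - 1)) ∧
    ∀ q : Fin (n + 2) → ℤ, (∑ i, p i) = (∑ i, q i) →
      jensenSum (n + 2) k p = jensenSum (n + 2) k q := by
  constructor
  · have h1 : (1 : Fin (n+2)) ≠ 0 := by
      intro h
      have := congrArg Fin.val h
      simp [Fin.val_one] at this
    exact (jensenSum_move n k p 1 h1 (p 0 + 1) (p 1 - 1) (by ring)).symm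
  · intro q hsum
    refine jensenSum_key n k (n+1) p q ?_ hsum
    intro i hi
    have := i.isLt
    omega
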